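/- Sequential Gibbs sampling on an n-variable distribution π with total influence α < 1 has mixing time t_mix(ε) ≤ (n/(1−α))·log(n/ε): for all t ≥ (n/(1−α))·log(n/ε) and any initial distribution μ_0, ‖P^{(t)} μ_0 − π‖_TV ≤ ε. -/

import Mathlib

noncomputable def tvDist {Ω : Type*} [Fintype Ω] (μ ν : Ω → ℝ) : ℝ :=
  ⨆ A : Finset Ω, |∑ x ∈ A, μ x - ∑ x ∈ A, ν x|

def IsDist {Ω : Type*} [Fintype Ω] (μ : Ω → ℝ) : Prop :=
  (∀ x, 0 ≤ μ x) ∧ ∑ x, μ x = 1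

open Finset Function

lemma tvDist_nonneg {Ω : Type*} [Fintype Ω] (μ ν : Ω → ℝ) : 0 ≤ tvDist μ ν :=
  Real.iSup_nonneg fun _ => abs_nonneg _

lemma le_tvDist {Ω : Type*} [Fintype Ω] (μ ν : Ω → ℝ) (A : Finset Ω) :
    |∑ x ∈ A, μ x - ∑ x ∈ A, ν x| ≤ tvDist μ ν := by
  unfold tvDist
  exact le_ciSup (f := fun A : Finset Ω => |∑ x ∈ A, μ x - ∑ x ∈ A, ν x|) (Set.Finite.bddAbove (Set.finite_range _)) A

lemma tvDist_le {Ω : Type*} [Fintype Ω] {μ ν : Ω → ℝ} {c : ℝ}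
    (h : ∀ A : Finset Ω, |∑ x ∈ A, μ x - ∑ x ∈ A, ν x| ≤ c) : tvDist μ ν ≤ c := by
  unfold tvDist
  exact ciSup_le h

lemma tvDist_comm {Ω : Type*} [Fintype Ω] (μ ν : Ω → ℝ) : tvDist μ ν = tvDist ν μ := by
  unfold tvDist; congr 1; funext A; rw [abs_sub_comm]

lemma sum_sub_mul_le {S : Type*} [Fintype S] {p q g : S → ℝ} {m M : ℝ}
    (hp : IsDist p) (hq : IsDist q) (hm : ∀ s, m ≤ g s) (hM : ∀ s, g s ≤ M)
    (hmM : m ≤ M) :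
    ∑ s, (p s - q s) * g s ≤ tvDist p q * (M - m) := by
  classical
  set A : Finset S := univ.filter (fun s => q s ≤ p s) with hA
  have hsplit : ∑ s, (p s - q s) * g s =
      ∑ s ∈ A, (p s - q s) * g s + ∑ s ∈ Aᶜ, (p s - q s) * g s :=
    (Finset.sum_add_sum_compl A _).symm
  have h1 : ∑ s ∈ A, (p s - q s) * g s ≤ (∑ s ∈ A, (p s - q s)) * M := by
    rw [Finset.sum_mul]
    apply Finset.sum_le_sum
    intro s hs
    have hle : 0 ≤ p s - q s := sub_nonneg.mpr (by simpa [hA] using hs)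
    exact mul_le_mul_of_nonneg_left (hM s) hle
  have h2 : ∑ s ∈ Aᶜ, (p s - q s) * g s ≤ (∑ s ∈ Aᶜ, (p s - q s)) * m := by
    rw [Finset.sum_mul]
    apply Finset.sum_le_sum
    intro s hs
    have hsA : ¬ q s ≤ p s := by simpa [hA] using (Finset.mem_compl.mp hs)
    have hle : p s - q s ≤ 0 := by have := lt_of_not_ge hsA; linarith
    calc (p s - q s) * g s ≤ (p s - q s) * m := by
          rcases lt_or_eq_of_le hle with h | h
          · exact (mul_le_mul_left_of_neg h).mpr (hm s)
          · simp [h]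
      _ = (p s - q s) * m := rfl
  have htot : ∑ s, (p s - q s) = 0 := by
    rw [Finset.sum_sub_distrib, hp.2, hq.2]; ring
  have hAc : ∑ s ∈ Aᶜ, (p s - q s) = -(∑ s ∈ A, (p s - q s)) := by
    have h := Finset.sum_add_sum_compl A (fun s => p s - q s)
    rw [htot] at h; linarith
  set a := ∑ s ∈ A, (p s - q s) with ha
  have haeq : a = ∑ x ∈ A, p x - ∑ x ∈ A, q x := Finset.sum_sub_distrib _ _
  have hatv : a ≤ tvDist p q := by
    calc a ≤ |a| := le_abs_self a
      _ ≤ tvDist p q := by rw [haeq]; exact le_tvDist p q A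
  calc ∑ s, (p s - q s) * g s ≤ a * M + (-a) * m := by rw [hsplit, ← hAc]; linarith
    _ = a * (M - m) := by ring
    _ ≤ tvDist p q * (M - m) := mul_le_mul_of_nonneg_right hatv (by linarith)

lemma abs_sum_sub_mul_le {S : Type*} [Fintype S] {p q g : S → ℝ} {m M : ℝ}
    (hp : IsDist p) (hq : IsDist q) (hm : ∀ s, m ≤ g s) (hM : ∀ s, g s ≤ M)
    (hmM : m ≤ M) :
    |∑ s, (p s - q s) * g s| ≤ tvDist p q * (M - m) := by
  have h1 := sum_sub_mul_le hp hq hm hM hmM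
  have h2 := sum_sub_mul_le hq hp hm hM hmM
  rw [tvDist_comm] at h2
  have h3 : ∑ s, (q s - p s) * g s = -∑ s, (p s - q s) * g s := by
    rw [← Finset.sum_neg_distrib]
    exact Finset.sum_congr rfl fun s _ => by ring
  rw [h3] at h2
  rw [abs_le]
  constructor <;> linarith

noncomputable def condDist {I S : Type*} [Fintype I] [Fintype S] [DecidableEq I]
    (π : (I → S) → ℝ) (i : I) (x : I → S) : S → ℝ :=
  fun s => π (Function.update x i s) / ∑ s' : S, π (Function.update x i s')

noncomputable def totalInfluence {I S : Type*} [Fintype I] [Fintype S] [DecidableEq I]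
    (π : (I → S) → ℝ) : ℝ :=
  ⨆ i : I, ∑ j : I,
    ⨆ p : {p : (I → S) × (I → S) // ∀ k, k ≠ j → p.1 k = p.2 k},
      tvDist (condDist π i p.1.1) (condDist π i p.1.2)

noncomputable def gibbsKernel {I S : Type*} [Fintype I] [Fintype S]
    [DecidableEq I] [DecidableEq S] (π : (I → S) → ℝ) (x y : I → S) : ℝ :=
  (Fintype.card I : ℝ)⁻¹ *
    ∑ i : I, if ∀ j, j ≠ i → y j = x j then condDist π i x (y i) else 0

noncomputable def evolve {Ω : Type*} [Fintype Ω] (K : Ω → Ω → ℝ) (μ : Ω → ℝ) : Ω → ℝ :=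
  fun y => ∑ x, μ x * K x y

noncomputable def iter {Ω : Type*} [Fintype Ω] (K : Ω → Ω → ℝ) (t : ℕ) (μ : Ω → ℝ) : Ω → ℝ :=
  (evolve K)^[t] μ

/-! ### Oscillation -/

noncomputable def oscAt {I S : Type*} [Fintype I] [Fintype S]
    (f : (I → S) → ℝ) (j : I) : ℝ :=
  ⨆ p : {p : (I → S) × (I → S) // ∀ k, k ≠ j → p.1 k = p.2 k}, |f p.1.1 - f p.1.2|

lemma oscAt_nonneg {I S : Type*} [Fintype I] [Fintype S] (f : (I → S) → ℝ) (j : I) :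
    0 ≤ oscAt f j :=
  Real.iSup_nonneg fun _ => abs_nonneg _

lemma abs_sub_le_oscAt {I S : Type*} [Fintype I] [Fintype S] (f : (I → S) → ℝ) (j : I)
    {x y : I → S} (h : ∀ k, k ≠ j → x k = y k) : |f x - f y| ≤ oscAt f j := by
  unfold oscAt
  exact le_ciSup (f := fun p : {p : (I → S) × (I → S) // ∀ k, k ≠ j → p.1 k = p.2 k} =>
    |f p.1.1 - f p.1.2|) (Set.Finite.bddAbove (Set.finite_range _)) ⟨(x, y), h⟩

lemma oscAt_le {I S : Type*} [Fintype I] [Fintype S] [Nonempty S] {f : (I → S) → ℝ} {j : I}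
    {c : ℝ} (h : ∀ x y : I → S, (∀ k, k ≠ j → x k = y k) → |f x - f y| ≤ c) :
    oscAt f j ≤ c := by
  unfold oscAt
  have : Nonempty {p : (I → S) × (I → S) // ∀ k, k ≠ j → p.1 k = p.2 k} := by
    obtain ⟨x⟩ : Nonempty (I → S) := inferInstance
    exact ⟨⟨(x, x), fun _ _ => rfl⟩⟩
  exact ciSup_le fun p => h p.1.1 p.1.2 p.2

/-! ### condDist facts -/

lemma condDist_isDist {I S : Type*} [Fintype I] [Fintype S] [DecidableEq I] [Nonempty S]
    {π : (I → S) → ℝ} (hpos : ∀ x, 0 < π x) (i : I) (x : I → S) :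
    IsDist (condDist π i x) := by
  have hZ : 0 < ∑ s' : S, π (Function.update x i s') :=
    Finset.sum_pos (fun s _ => hpos _) Finset.univ_nonempty
  constructor
  · intro s; exact div_nonneg (hpos _).le hZ.le
  · unfold condDist
    rw [← Finset.sum_div, div_self hZ.ne']

/-! ### Influence and operators -/

noncomputable def infl {I S : Type*} [Fintype I] [Fintype S] [DecidableEq I]
    (π : (I → S) → ℝ) (i j : I) : ℝ :=
  ⨆ p : {p : (I → S) × (I → S) // ∀ k, k ≠ j → p.1 k = p.2 k},
    tvDist (condDist π i p.1.1) (condDist π i p.1.2)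

lemma totalInfluence_eq {I S : Type*} [Fintype I] [Fintype S] [DecidableEq I]
    (π : (I → S) → ℝ) : totalInfluence π = ⨆ i : I, ∑ j : I, infl π i j := rfl

lemma infl_nonneg {I S : Type*} [Fintype I] [Fintype S] [DecidableEq I]
    (π : (I → S) → ℝ) (i j : I) : 0 ≤ infl π i j :=
  Real.iSup_nonneg fun _ => tvDist_nonneg _ _

lemma tvDist_condDist_le_infl {I S : Type*} [Fintype I] [Fintype S] [DecidableEq I]
    (π : (I → S) → ℝ) (i j : I) {x y : I → S} (h : ∀ k, k ≠ j → x k = y k) :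
    tvDist (condDist π i x) (condDist π i y) ≤ infl π i j := by
  unfold infl
  exact le_ciSup (f := fun p : {p : (I → S) × (I → S) // ∀ k, k ≠ j → p.1 k = p.2 k} =>
    tvDist (condDist π i p.1.1) (condDist π i p.1.2))
    (Set.Finite.bddAbove (Set.finite_range _)) ⟨(x, y), h⟩

lemma totalInfluence_nonneg {I S : Type*} [Fintype I] [Fintype S] [DecidableEq I]
    (π : (I → S) → ℝ) : 0 ≤ totalInfluence π :=
  Real.iSup_nonneg fun i => Finset.sum_nonneg fun j _ => infl_nonneg π i j

lemma row_le_totalInfluence {I S : Type*} [Fintype I] [Fintype S] [DecidableEq I]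
    (π : (I → S) → ℝ) (i : I) : ∑ j : I, infl π i j ≤ totalInfluence π := by
  rw [totalInfluence_eq]
  exact le_ciSup (f := fun i : I => ∑ j : I, infl π i j)
    (Set.Finite.bddAbove (Set.finite_range _)) i

noncomputable def condOp {I S : Type*} [Fintype I] [Fintype S] [DecidableEq I]
    (π : (I → S) → ℝ) (i : I) (f : (I → S) → ℝ) (x : I → S) : ℝ :=
  ∑ s, condDist π i x s * f (Function.update x i s)

noncomputable def Pop {I S : Type*} [Fintype I] [Fintype S] [DecidableEq I] [DecidableEq S]
    (π : (I → S) → ℝ) (f : (I → S) → ℝ) (x : I → S) : ℝ :=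
  ∑ y, gibbsKernel π x y * f y

/-! ### Reindexing sums over configurations agreeing off one coordinate -/

lemma filter_agree_eq_image {I S : Type*} [Fintype I] [Fintype S] [DecidableEq I]
    [DecidableEq S] (i : I) (z : I → S) :
    Finset.univ.filter (fun w : I → S => ∀ j, j ≠ i → w j = z j) =
      Finset.univ.image (fun s => Function.update z i s) := by
  ext y
  simp only [Finset.mem_filter, Finset.mem_univ, true_and, Finset.mem_image]
  constructor
  · intro h
    refine ⟨y i, ?_⟩
    funext k
    by_cases hk : k = i
    · subst hk; simp
    · rw [Function.update_of_ne hk, h k hk]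
  · rintro ⟨s, rfl⟩ j hj
    exact Function.update_of_ne hj _ _

lemma sum_agree {I S : Type*} [Fintype I] [Fintype S] [DecidableEq I] [DecidableEq S]
    (i : I) (z : I → S) (c : (I → S) → ℝ) :
    ∑ w : I → S, (if ∀ j, j ≠ i → w j = z j then c w else 0) =
      ∑ s, c (Function.update z i s) := by
  classical
  rw [← Finset.sum_filter, filter_agree_eq_image]
  rw [Finset.sum_image]
  intro a _ b _ h
  have := congrFun h i
  simpa using this

lemma sum_agree' {I S : Type*} [Fintype I] [Fintype S] [DecidableEq I] [DecidableEq S]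
    (i : I) (z : I → S) (c : (I → S) → ℝ) :
    ∑ w : I → S, (if ∀ j, j ≠ i → z j = w j then c w else 0) =
      ∑ s, c (Function.update z i s) := by
  have h : ∀ w : I → S, (if ∀ j, j ≠ i → z j = w j then c w else 0) =
      (if ∀ j, j ≠ i → w j = z j then c w else 0) := by
    intro w
    by_cases hw : ∀ j, j ≠ i → w j = z j
    · rw [if_pos (fun j hj => (hw j hj).symm), if_pos hw]
    · rw [if_neg (fun hz : ∀ j, j ≠ i → z j = w j => hw (fun j hj => (hz j hj).symm)),
        if_neg hw]
  rw [Finset.sum_congr rfl (fun w _ => h w), sum_agree]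

lemma Pop_eq {I S : Type*} [Fintype I] [Fintype S] [DecidableEq I] [DecidableEq S]
    (π : (I → S) → ℝ) (f : (I → S) → ℝ) (x : I → S) :
    Pop π f x = (Fintype.card I : ℝ)⁻¹ * ∑ i, condOp π i f x := by
  unfold Pop gibbsKernel condOp
  have hy : ∀ y : I → S,
      ((Fintype.card I : ℝ)⁻¹ *
        ∑ i, if ∀ j, j ≠ i → y j = x j then condDist π i x (y i) else 0) * f y
      = (Fintype.card I : ℝ)⁻¹ * ∑ i,
          (if ∀ j, j ≠ i → y j = x j then condDist π i x (y i) * f y else 0) := by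
    intro y
    rw [mul_assoc, Finset.sum_mul]
    congr 1
    apply Finset.sum_congr rfl
    intro i _
    rw [ite_mul, zero_mul]
  rw [Finset.sum_congr rfl (fun y _ => hy y), ← Finset.mul_sum]
  congr 1
  rw [Finset.sum_comm]
  apply Finset.sum_congr rfl
  intro i _
  rw [sum_agree i x (fun w => condDist π i x (w i) * f w)]
  simp

/-! ### Stationarity -/

lemma evolve_gibbs_fixed {I S : Type*} [Fintype I] [Fintype S] [DecidableEq I] [DecidableEq S]
    [Nonempty S] (π : (I → S) → ℝ) (hpos : ∀ x, 0 < π x) (hI : 0 < Fintype.card I) :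
    evolve (gibbsKernel π) π = π := by
  funext y
  unfold evolve gibbsKernel
  have hy : ∀ x : I → S,
      π x * ((Fintype.card I : ℝ)⁻¹ *
        ∑ i, if ∀ j, j ≠ i → y j = x j then condDist π i x (y i) else 0)
      = (Fintype.card I : ℝ)⁻¹ * ∑ i,
          (if ∀ j, j ≠ i → y j = x j then π x * condDist π i x (y i) else 0) := by
    intro x
    rw [← mul_assoc, mul_comm (π x) _, mul_assoc, Finset.mul_sum]
    congr 1
    apply Finset.sum_congr rfl
    intro i _
    rw [mul_ite, mul_zero]
  rw [Finset.sum_congr rfl (fun x _ => hy x), ← Finset.mul_sum, Finset.sum_comm]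
  have hinner : ∀ i : I,
      (∑ x : I → S, if ∀ j, j ≠ i → y j = x j then π x * condDist π i x (y i) else 0) = π y := by
    intro i
    rw [sum_agree' i y (fun w => π w * condDist π i w (y i))]
    have hcond : ∀ s : S, condDist π i (Function.update y i s) (y i) =
        π y / ∑ s' : S, π (Function.update y i s') := by
      intro s
      unfold condDist
      simp [Function.update_idem, Function.update_eq_self]
    have hZ : 0 < ∑ s' : S, π (Function.update y i s') :=
      Finset.sum_pos (fun s _ => hpos _) Finset.univ_nonempty
    calc ∑ s : S, π (Function.update y i s) * condDist π i (Function.update y i s) (y i)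
        = ∑ s : S, π (Function.update y i s) * (π y / ∑ s' : S, π (Function.update y i s')) := by
          apply Finset.sum_congr rfl; intro s _; rw [hcond s]
      _ = (∑ s : S, π (Function.update y i s)) * (π y / ∑ s' : S, π (Function.update y i s')) :=
          (Finset.sum_mul _ _ _).symm
      _ = π y := by
          rw [mul_comm]
          exact div_mul_cancel₀ _ hZ.ne'
  rw [Finset.sum_congr rfl (fun i _ => hinner i), Finset.sum_const, Finset.card_univ,
    nsmul_eq_mul]
  rw [← mul_assoc, inv_mul_cancel₀ (by exact_mod_cast hI.ne' : (Fintype.card I : ℝ) ≠ 0), one_mul]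

/-! ### Duality -/

lemma evolve_pair {I S : Type*} [Fintype I] [Fintype S] [DecidableEq I] [DecidableEq S]
    (π : (I → S) → ℝ) (μ f : (I → S) → ℝ) :
    ∑ y, evolve (gibbsKernel π) μ y * f y = ∑ x, μ x * Pop π f x := by
  unfold evolve Pop
  calc ∑ y, (∑ x, μ x * gibbsKernel π x y) * f y
      = ∑ y, ∑ x, μ x * gibbsKernel π x y * f y := by
        apply Finset.sum_congr rfl; intro y _; rw [Finset.sum_mul]
    _ = ∑ x, ∑ y, μ x * gibbsKernel π x y * f y := Finset.sum_comm
    _ = ∑ x, μ x * ∑ y, gibbsKernel π x y * f y := by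
        apply Finset.sum_congr rfl; intro x _
        rw [Finset.mul_sum]
        apply Finset.sum_congr rfl; intro y _; rw [mul_assoc]

lemma iter_pair {I S : Type*} [Fintype I] [Fintype S] [DecidableEq I] [DecidableEq S]
    (π : (I → S) → ℝ) (f : (I → S) → ℝ) (t : ℕ) (μ : (I → S) → ℝ) :
    ∑ y, iter (gibbsKernel π) t μ y * f y = ∑ x, μ x * (Pop π)^[t] f x := by
  induction t generalizing μ with
  | zero => simp [iter]
  | succ t ih =>
    have h1 : iter (gibbsKernel π) (t + 1) μ = iter (gibbsKernel π) t (evolve (gibbsKernel π) μ) := by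
      unfold iter
      exact Function.iterate_succ_apply _ _ _
    rw [h1, ih, evolve_pair, Function.iterate_succ_apply']

/-! ### One-step oscillation bounds -/

lemma condOp_eq_of_agree {I S : Type*} [Fintype I] [Fintype S] [DecidableEq I]
    (π : (I → S) → ℝ) (i : I) (f : (I → S) → ℝ) {x y : I → S}
    (h : ∀ k, k ≠ i → x k = y k) :
    condOp π i f x = condOp π i f y := by
  have hupd : ∀ s, Function.update x i s = Function.update y i s := by
    intro s
    funext k
    by_cases hk : k = i
    · subst hk; simp
    · rw [Function.update_of_ne hk, Function.update_of_ne hk, h k hk]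
  unfold condOp condDist
  simp only [hupd]

lemma condOp_sub_le {I S : Type*} [Fintype I] [Fintype S] [DecidableEq I] [Nonempty S]
    {π : (I → S) → ℝ} (hpos : ∀ x, 0 < π x) (i j : I) (f : (I → S) → ℝ)
    {x y : I → S} (hxy : ∀ k, k ≠ j → x k = y k) :
    |condOp π i f x - condOp π i f y| ≤ oscAt f j + infl π i j * oscAt f i := by
  classical
  have hpd := condDist_isDist hpos i x
  have hqd := condDist_isDist hpos i y
  set p := condDist π i x with hp
  set q := condDist π i y with hq
  have key : condOp π i f x - condOp π i f y
      = (∑ s, p s * (f (Function.update x i s) - f (Function.update y i s)))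
        + ∑ s, (p s - q s) * f (Function.update y i s) := by
    unfold condOp
    rw [← Finset.sum_add_distrib, ← Finset.sum_sub_distrib]
    apply Finset.sum_congr rfl
    intro s _
    ring
  rw [key]
  refine (abs_add_le _ _).trans (add_le_add ?_ ?_)
  · -- first term ≤ oscAt f j
    refine (Finset.abs_sum_le_sum_abs _ _).trans ?_
    have hterm : ∀ s : S, |p s * (f (Function.update x i s) - f (Function.update y i s))|
        ≤ p s * oscAt f j := by
      intro s
      rw [abs_mul, abs_of_nonneg (hpd.1 s)]
      apply mul_le_mul_of_nonneg_left _ (hpd.1 s)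
      apply abs_sub_le_oscAt
      intro k hk
      by_cases hki : k = i
      · subst hki; simp
      · rw [Function.update_of_ne hki, Function.update_of_ne hki, hxy k hk]
    calc ∑ s, |p s * (f (Function.update x i s) - f (Function.update y i s))|
        ≤ ∑ s, p s * oscAt f j := Finset.sum_le_sum fun s _ => hterm s
      _ = oscAt f j := by rw [← Finset.sum_mul, hpd.2, one_mul]
  · -- second term ≤ infl * oscAt f i
    obtain ⟨sM, _, hsM⟩ := Finset.exists_max_image (Finset.univ : Finset S)
      (fun s => f (Function.update y i s)) Finset.univ_nonempty
    obtain ⟨sm, _, hsm⟩ := Finset.exists_min_image (Finset.univ : Finset S)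
      (fun s => f (Function.update y i s)) Finset.univ_nonempty
    have hb := abs_sum_sub_mul_le hpd hqd
      (fun s => hsm s (Finset.mem_univ s)) (fun s => hsM s (Finset.mem_univ s))
      (hsm sM (Finset.mem_univ sM))
    refine hb.trans ?_
    apply mul_le_mul
    · exact tvDist_condDist_le_infl π i j hxy
    · refine (le_abs_self _).trans ?_
      apply abs_sub_le_oscAt
      intro k hk
      rw [Function.update_of_ne hk, Function.update_of_ne hk]
    · have := hsm sM (Finset.mem_univ sM); linarith
    · exact infl_nonneg π i j

lemma oscAt_Pop_le {I S : Type*} [Fintype I] [Fintype S] [DecidableEq I] [DecidableEq S]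
    [Nonempty S] [Nonempty I] {π : (I → S) → ℝ} (hpos : ∀ x, 0 < π x) (f : (I → S) → ℝ) (j : I) :
    oscAt (Pop π f) j ≤ (1 - (Fintype.card I : ℝ)⁻¹) * oscAt f j
      + (Fintype.card I : ℝ)⁻¹ * ∑ i, infl π i j * oscAt f i := by
  classical
  set N : ℝ := (Fintype.card I : ℝ) with hN
  apply oscAt_le
  intro x y hxy
  rw [Pop_eq, Pop_eq, ← mul_sub, ← Finset.sum_sub_distrib, abs_mul,
    abs_of_nonneg (inv_nonneg.mpr (Nat.cast_nonneg _))]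
  have hterm : ∀ i : I, |condOp π i f x - condOp π i f y|
      ≤ (if i = j then 0 else oscAt f j) + infl π i j * oscAt f i := by
    intro i
    by_cases hij : i = j
    · subst hij
      rw [condOp_eq_of_agree π i f hxy, sub_self, abs_zero, if_pos rfl, zero_add]
      exact mul_nonneg (infl_nonneg π i i) (oscAt_nonneg f i)
    · rw [if_neg hij]
      exact condOp_sub_le hpos i j f hxy
  have hsum : |∑ i, (condOp π i f x - condOp π i f y)|
      ≤ (N - 1) * oscAt f j + ∑ i, infl π i j * oscAt f i := by
    refine (Finset.abs_sum_le_sum_abs _ _).trans ?_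
    refine (Finset.sum_le_sum fun i _ => hterm i).trans ?_
    rw [Finset.sum_add_distrib]
    apply add_le_add_left
    have hite : ∀ i : I, (if i = j then (0:ℝ) else oscAt f j)
        = oscAt f j - (if i = j then oscAt f j else 0) := by
      intro i; by_cases h : i = j <;> simp [h]
    rw [Finset.sum_congr rfl (fun i _ => hite i), Finset.sum_sub_distrib,
      Finset.sum_const, Finset.card_univ, nsmul_eq_mul,
      Finset.sum_ite_eq' Finset.univ j (fun _ => oscAt f j), if_pos (Finset.mem_univ j)]
    exact le_of_eq (by rw [hN]; ring)
  refine (mul_le_mul_of_nonneg_left hsum (inv_nonneg.mpr (Nat.cast_nonneg _))).trans ?_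
  have hN0 : N ≠ 0 := by
    have h : 0 < Fintype.card I := Fintype.card_pos
    rw [hN]
    exact_mod_cast h.ne'
  exact le_of_eq (by field_simp; rfl)

/-! ### Global contraction -/

lemma W_Pop_le {I S : Type*} [Fintype I] [Fintype S] [DecidableEq I] [DecidableEq S]
    [Nonempty S] [Nonempty I] {π : (I → S) → ℝ} (hpos : ∀ x, 0 < π x)
    (f : (I → S) → ℝ) :
    ∑ j, oscAt (Pop π f) j
      ≤ (1 - (1 - totalInfluence π) / (Fintype.card I : ℝ)) * ∑ j, oscAt f j := by
  classical
  set N : ℝ := (Fintype.card I : ℝ) with hN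
  set α := totalInfluence π with hα
  have hN0 : N ≠ 0 := by
    have h : 0 < Fintype.card I := Fintype.card_pos
    rw [hN]; exact_mod_cast h.ne'
  calc ∑ j, oscAt (Pop π f) j
      ≤ ∑ j, ((1 - N⁻¹) * oscAt f j + N⁻¹ * ∑ i, infl π i j * oscAt f i) :=
        Finset.sum_le_sum fun j _ => oscAt_Pop_le hpos f j
    _ = (1 - N⁻¹) * ∑ j, oscAt f j + N⁻¹ * ∑ i, (∑ j, infl π i j) * oscAt f i := by
        rw [Finset.sum_add_distrib, ← Finset.mul_sum, ← Finset.mul_sum, Finset.sum_comm]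
        congr 2
        apply Finset.sum_congr rfl
        intro i _
        rw [Finset.sum_mul]
    _ ≤ (1 - N⁻¹) * ∑ j, oscAt f j + N⁻¹ * ∑ i, α * oscAt f i := by
        apply add_le_add_right
        apply mul_le_mul_of_nonneg_left _ (inv_nonneg.mpr (Nat.cast_nonneg _))
        apply Finset.sum_le_sum
        intro i _
        exact mul_le_mul_of_nonneg_right (row_le_totalInfluence π i) (oscAt_nonneg f i)
    _ = (1 - (1 - α) / N) * ∑ j, oscAt f j := by
        rw [← Finset.mul_sum]
        field_simp
        ring

lemma W_iter_le {I S : Type*} [Fintype I] [Fintype S] [DecidableEq I] [DecidableEq S]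
    [Nonempty S] [Nonempty I] {π : (I → S) → ℝ} (hpos : ∀ x, 0 < π x)
    (hα : totalInfluence π < 1) (f : (I → S) → ℝ) (t : ℕ) :
    ∑ j, oscAt ((Pop π)^[t] f) j
      ≤ (1 - (1 - totalInfluence π) / (Fintype.card I : ℝ))^t * ∑ j, oscAt f j := by
  classical
  set κ := 1 - (1 - totalInfluence π) / (Fintype.card I : ℝ) with hκ
  have hκ0 : 0 ≤ κ := by
    have hα0 : 0 ≤ totalInfluence π := totalInfluence_nonneg π
    have hc : (1:ℝ) ≤ (Fintype.card I : ℝ) := by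
      exact_mod_cast Fintype.card_pos
    have hd : (1 - totalInfluence π) / (Fintype.card I : ℝ) ≤ 1 := by
      rw [div_le_one (by linarith)]
      linarith
    rw [hκ]; linarith
  induction t with
  | zero => simp
  | succ t ih =>
    rw [Function.iterate_succ_apply']
    refine (W_Pop_le hpos _).trans ?_
    calc κ * ∑ j, oscAt ((Pop π)^[t] f) j
        ≤ κ * ((κ:ℝ)^t * ∑ j, oscAt f j) := mul_le_mul_of_nonneg_left ih hκ0
      _ = κ^(t+1) * ∑ j, oscAt f j := by ring

/-! ### Telescoping over coordinates -/

lemma abs_sub_le_W {n : ℕ} {S : Type*} [Fintype S] (g : (Fin n → S) → ℝ)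
    (x y : Fin n → S) :
    |g x - g y| ≤ ∑ j, oscAt g j := by
  classical
  set z : ℕ → Fin n → S := fun k j => if (j : ℕ) < k then x j else y j with hz
  have hz0 : z 0 = y := by funext j; simp [hz]
  have hzn : z n = x := by funext j; simp [hz, j.isLt]
  have htel : g x - g y = ∑ k ∈ Finset.range n, (g (z (k+1)) - g (z k)) := by
    rw [Finset.sum_range_sub (fun k => g (z k)), hz0, hzn]
  rw [htel]
  refine (Finset.abs_sum_le_sum_abs _ _).trans ?_
  rw [← Fin.sum_univ_eq_sum_range (fun k => |g (z (k+1)) - g (z k)|) n]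
  apply Finset.sum_le_sum
  intro j _
  apply abs_sub_le_oscAt
  intro k hk
  simp only [hz]
  have hne : (k : ℕ) ≠ (j : ℕ) := fun h => hk (Fin.ext h)
  have hiff : ((k : Fin n) : ℕ) < (j : ℕ) + 1 ↔ ((k : Fin n) : ℕ) < (j : ℕ) := by omega
  rw [if_congr hiff rfl rfl]

/-- sequential Gibbs sampling on an `n`-variable distribution `π`
with total influence `α < 1` satisfies `t_mix(ε) ≤ (n/(1−α))·log(n/ε)`:
for all `t` at least this value and any initial distribution `μ₀`,
`‖P^{(t)} μ₀ − π‖_TV ≤ ε`. -/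
theorem gibbs_mixing_time_dobrushin {n : ℕ} (hn : 0 < n)
    {S : Type*} [Fintype S] [DecidableEq S]
    (π : (Fin n → S) → ℝ) (hπ : IsDist π) (hpos : ∀ x, 0 < π x)
    (hα : totalInfluence π < 1)
    (ε : ℝ) (hε : 0 < ε) (t : ℕ)
    (ht : (n : ℝ) / (1 - totalInfluence π) * Real.log (n / ε) ≤ t)
    (μ0 : (Fin n → S) → ℝ) (hμ0 : IsDist μ0) :
    tvDist (iter (gibbsKernel π) t μ0) π ≤ ε := by
  classical
  haveI hSne : Nonempty S := by
    by_contra h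
    haveI he : IsEmpty (Fin n → S) := ⟨fun f => h ⟨f ⟨0, hn⟩⟩⟩
    have h1 : (1:ℝ) = 0 := by
      rw [← hπ.2]
      simp [Finset.univ_eq_empty]
    norm_num at h1
  haveI : Nonempty (Fin n) := ⟨⟨0, hn⟩⟩
  have hcard : (Fintype.card (Fin n) : ℝ) = (n : ℝ) := by rw [Fintype.card_fin]
  set α := totalInfluence π with hαdef
  have hα0 : 0 ≤ α := totalInfluence_nonneg π
  have h1α : 0 < 1 - α := by linarith
  have hn' : (0:ℝ) < n := by exact_mod_cast hn
  set κ : ℝ := 1 - (1 - α) / n with hκdef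
  have hκ0 : 0 ≤ κ := by
    have hd : (1 - α) / (n:ℝ) ≤ 1 := by
      rw [div_le_one hn']
      have : (1:ℝ) ≤ n := by exact_mod_cast hn
      linarith
    rw [hκdef]; linarith
  have hκe : κ ≤ Real.exp (-(1 - α) / n) := by
    have h := Real.add_one_le_exp (-(1 - α) / n)
    rw [hκdef]
    have : -(1 - α) / (n:ℝ) = -((1 - α) / n) := by ring
    rw [this] at h ⊢
    linarith
  -- main bound
  apply tvDist_le
  intro A
  set ind : (Fin n → S) → ℝ := fun y => if y ∈ A then (1:ℝ) else 0 with hind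
  set G : (Fin n → S) → ℝ := (Pop π)^[t] ind with hG
  have hindsum : ∀ v : (Fin n → S) → ℝ, ∑ y, v y * ind y = ∑ x ∈ A, v x := by
    intro v
    simp [hind, mul_ite, mul_one, mul_zero, Finset.sum_ite_mem, Finset.univ_inter]
  have hA1 : ∑ x ∈ A, iter (gibbsKernel π) t μ0 x = ∑ x, μ0 x * G x := by
    rw [← hindsum (iter (gibbsKernel π) t μ0), iter_pair]
  have hfix : iter (gibbsKernel π) t π = π := by
    show (evolve (gibbsKernel π))^[t] π = π
    apply Function.iterate_fixed
    apply evolve_gibbs_fixed π hpos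
    rw [Fintype.card_fin]; exact hn
  have hA2 : ∑ x ∈ A, π x = ∑ x, π x * G x := by
    conv_lhs => rw [← hfix]
    rw [← hindsum (iter (gibbsKernel π) t π), iter_pair]
  rw [hA1, hA2]
  have hdiff : ∑ x, μ0 x * G x - ∑ x, π x * G x = ∑ x, (μ0 x - π x) * G x := by
    rw [← Finset.sum_sub_distrib]
    apply Finset.sum_congr rfl
    intro x _
    ring
  rw [hdiff]
  obtain ⟨xM, _, hxM⟩ := Finset.exists_max_image (Finset.univ : Finset (Fin n → S)) G
    Finset.univ_nonempty
  obtain ⟨xm, _, hxm⟩ := Finset.exists_min_image (Finset.univ : Finset (Fin n → S)) G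
    Finset.univ_nonempty
  have hb := abs_sum_sub_mul_le hμ0 hπ (fun x => hxm x (Finset.mem_univ x))
    (fun x => hxM x (Finset.mem_univ x)) (hxm xM (Finset.mem_univ xM))
  refine hb.trans ?_
  have htv1 : tvDist μ0 π ≤ 1 := by
    apply tvDist_le
    intro B
    have h01 : ∀ ρ : (Fin n → S) → ℝ, IsDist ρ →
        0 ≤ ∑ x ∈ B, ρ x ∧ ∑ x ∈ B, ρ x ≤ 1 := by
      intro ρ hρ
      refine ⟨Finset.sum_nonneg fun x _ => hρ.1 x, ?_⟩
      rw [← hρ.2]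
      exact Finset.sum_le_sum_of_subset_of_nonneg (Finset.subset_univ B)
        fun x _ _ => hρ.1 x
    obtain ⟨a1, a2⟩ := h01 μ0 hμ0
    obtain ⟨b1, b2⟩ := h01 π hπ
    rw [abs_le]
    constructor <;> linarith
  have hWrec : ∑ j, oscAt G j ≤ κ^t * ∑ j, oscAt ind j := by
    have h := W_iter_le hpos hα ind t
    rw [hcard] at h
    exact h
  have hWind : ∑ j, oscAt ind j ≤ (n : ℝ) := by
    calc ∑ j, oscAt ind j ≤ ∑ _j : Fin n, (1:ℝ) := by
          apply Finset.sum_le_sum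
          intro j _
          apply oscAt_le
          intro x y _
          rw [hind]
          dsimp only
          split_ifs <;> norm_num
      _ = (n : ℝ) := by simp
  have hosc : G xM - G xm ≤ κ^t * (n:ℝ) := by
    have h1 : G xM - G xm ≤ ∑ j, oscAt G j :=
      (le_abs_self _).trans (abs_sub_le_W G xM xm)
    refine h1.trans (hWrec.trans ?_)
    exact mul_le_mul_of_nonneg_left hWind (pow_nonneg hκ0 t)
  have hfinal : (n:ℝ) * κ^t ≤ ε := by
    have hL : Real.log ((n:ℝ) / ε) ≤ (1 - α) * t / n := by
      have h := mul_le_mul_of_nonneg_left ht (le_of_lt (div_pos h1α hn'))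
      have heq : (1 - α) / (n:ℝ) * ((n:ℝ) / (1 - α) * Real.log ((n:ℝ) / ε))
          = Real.log ((n:ℝ) / ε) := by
        field_simp
      rw [heq] at h
      calc Real.log ((n:ℝ) / ε) ≤ (1 - α) / (n:ℝ) * t := h
        _ = (1 - α) * t / n := by ring
    have hexp : (n:ℝ) / ε ≤ Real.exp ((1 - α) * t / n) := by
      have hpos' : 0 < (n:ℝ) / ε := div_pos hn' hε
      calc (n:ℝ) / ε = Real.exp (Real.log ((n:ℝ) / ε)) := (Real.exp_log hpos').symm
        _ ≤ Real.exp ((1 - α) * t / n) := Real.exp_le_exp.mpr hL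
    have hκt : κ^t ≤ Real.exp (-((1 - α) * t / n)) := by
      calc κ^t ≤ (Real.exp (-(1 - α) / n))^t := pow_le_pow_left₀ hκ0 hκe t
        _ = Real.exp (-((1 - α) * t / n)) := by
            rw [← Real.exp_nat_mul]
            congr 1
            ring
    calc (n:ℝ) * κ^t ≤ (n:ℝ) * Real.exp (-((1 - α) * t / n)) :=
          mul_le_mul_of_nonneg_left hκt hn'.le
      _ ≤ ε := by
          rw [Real.exp_neg, ← div_eq_mul_inv, div_le_iff₀ (Real.exp_pos _)]
          have := (div_le_iff₀ hε).mp hexp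
          linarith
  calc tvDist μ0 π * (G xM - G xm) ≤ 1 * (κ^t * (n:ℝ)) := by
        apply mul_le_mul htv1 hosc _ zero_le_one
        have := hxm xM (Finset.mem_univ xM)
        linarith
    _ = (n:ℝ) * κ^t := by ring
    _ ≤ ε := hfinal
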